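/- Suppose X_{*,1} and X_{*,2} are symmetric matrices and K_{*,1}, K_{*,2} are Schur-stabilizing gains (ρ(A − BK_{*,i}) < 1) such that each pair satisfies the Lyapunov equation A_{K_{*,i}}ᵀ X_{*,i} A_{K_{*,i}} + Q + K_{*,i}ᵀ R K_{*,i} = X_{*,i} and the stationarity condition R K_{*,i} − Bᵀ X_{*,i}(A − B K_{*,i}) = 0, and suppose R + Bᵀ X_{*,1} B ⪰ 0 and R + Bᵀ X_{*,2} B ⪰ 0. Then X_{*,1} = X_{*,2}. -/

import Mathlib

open Matrix
open scoped ENNReal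

/-- Spectral radius of a real square matrix, computed over ℂ. -/
noncomputable def specRad {n : ℕ} (A : Matrix (Fin n) (Fin n) ℝ) : ℝ≥0∞ :=
  spectralRadius ℂ (A.map Complex.ofReal)

/-- A real square matrix is Schur stable if its spectral radius is `< 1`. -/
def IsSchur {n : ℕ} (A : Matrix (Fin n) (Fin n) ℝ) : Prop := specRad A < 1

section Aux

open Filter Topology

attribute [local instance] Matrix.linftyOpNormedRing Matrix.linftyOpNormedAlgebra

private lemma entry_nnnorm_le {n : ℕ} (M : Matrix (Fin n) (Fin n) ℂ) (i j : Fin n) :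
    ‖M i j‖₊ ≤ ‖M‖₊ := by
  rw [Matrix.linfty_opNNNorm_def]
  calc ‖M i j‖₊ ≤ ∑ k : Fin n, ‖M i k‖₊ :=
        Finset.single_le_sum (f := fun k => ‖M i k‖₊) (fun k _ => zero_le) (Finset.mem_univ j)
    _ ≤ _ := Finset.le_sup (f := fun i => ∑ k : Fin n, ‖M i k‖₊) (Finset.mem_univ i)

private lemma schur_entry_tendsto {n : ℕ} {A : Matrix (Fin n) (Fin n) ℝ} (hA : IsSchur A)
    (i j : Fin n) : Tendsto (fun k : ℕ => (A ^ k) i j) atTop (𝓝 0) := by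
  set Ac : Matrix (Fin n) (Fin n) ℂ := A.map Complex.ofReal with hAc
  have hpow : ∀ k : ℕ, Ac ^ k = (A ^ k).map Complex.ofReal := by
    intro k
    have h : ∀ M : Matrix (Fin n) (Fin n) ℝ, M.map Complex.ofReal = Complex.ofRealHom.mapMatrix M :=
      fun M => rfl
    rw [hAc, h, h, ← map_pow]
  have hG := spectrum.pow_nnnorm_pow_one_div_tendsto_nhds_spectralRadius Ac
  obtain ⟨c, hc1, hc2⟩ := exists_between (hA : spectralRadius ℂ Ac < 1)
  have hev : ∀ᶠ k : ℕ in atTop, (‖Ac ^ k‖₊ : ℝ≥0∞) ^ (1 / (k : ℝ)) < c :=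
    hG.eventually_lt_const hc1
  have hev2 : ∀ᶠ k : ℕ in atTop, (‖Ac ^ k‖₊ : ℝ≥0∞) ≤ c ^ k := by
    filter_upwards [hev, eventually_ge_atTop 1] with k hk hk1
    have hk0 : (k : ℝ) ≠ 0 := by positivity
    calc (‖Ac ^ k‖₊ : ℝ≥0∞) = ((‖Ac ^ k‖₊ : ℝ≥0∞) ^ (1 / (k : ℝ))) ^ (k : ℝ) := by
          rw [← ENNReal.rpow_mul, one_div, inv_mul_cancel₀ hk0, ENNReal.rpow_one]
      _ ≤ c ^ (k : ℝ) := ENNReal.rpow_le_rpow hk.le (by positivity)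
      _ = c ^ k := by rw [ENNReal.rpow_natCast]
  have hcpow : Tendsto (fun k : ℕ => c ^ k) atTop (𝓝 (0 : ℝ≥0∞)) :=
    ENNReal.tendsto_pow_atTop_nhds_zero_of_lt_one hc2
  have hnorm : Tendsto (fun k : ℕ => (‖Ac ^ k‖₊ : ℝ≥0∞)) atTop (𝓝 0) :=
    tendsto_of_tendsto_of_tendsto_of_le_of_le' tendsto_const_nhds hcpow
      (Eventually.of_forall fun _ => zero_le) hev2
  have hnormR : Tendsto (fun k : ℕ => ‖Ac ^ k‖) atTop (𝓝 0) := by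
    have h := (ENNReal.tendsto_toReal ENNReal.zero_ne_top).comp hnorm
    simpa [Function.comp_def] using h
  refine squeeze_zero_norm (fun k => ?_) hnormR
  have h1 : ‖(Ac ^ k) i j‖ ≤ ‖Ac ^ k‖ := entry_nnnorm_le (Ac ^ k) i j
  have h2 : (Ac ^ k) i j = ((A ^ k) i j : ℂ) := by rw [hpow]; rfl
  rw [h2, Complex.norm_real] at h1
  exact h1

private lemma quad_nonpos {n : ℕ} {A Z : Matrix (Fin n) (Fin n) ℝ} (hA : IsSchur A)
    (h : (Aᵀ * Z * A - Z).PosSemidef) (x : Fin n → ℝ) : x ⬝ᵥ (Z *ᵥ x) ≤ 0 := by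
  have hstep : ∀ v : Fin n → ℝ, v ⬝ᵥ (Z *ᵥ v) ≤ (A *ᵥ v) ⬝ᵥ (Z *ᵥ (A *ᵥ v)) := by
    intro v
    have hps : 0 ≤ v ⬝ᵥ ((Aᵀ * Z * A - Z) *ᵥ v) := by simpa using h.dotProduct_mulVec_nonneg v
    have hq : (A *ᵥ v) ⬝ᵥ (Z *ᵥ (A *ᵥ v)) = v ⬝ᵥ ((Aᵀ * Z * A) *ᵥ v) := by
      rw [← Matrix.mulVec_mulVec, ← Matrix.mulVec_mulVec, Matrix.dotProduct_mulVec v,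
        Matrix.vecMul_transpose]
    rw [Matrix.sub_mulVec, dotProduct_sub, sub_nonneg] at hps
    rw [hq]
    exact hps
  have hiter : ∀ k : ℕ, x ⬝ᵥ (Z *ᵥ x) ≤ (A ^ k *ᵥ x) ⬝ᵥ (Z *ᵥ (A ^ k *ᵥ x)) := by
    intro k
    induction k with
    | zero => simp
    | succ k ih =>
      refine ih.trans ?_
      have hk : A ^ (k + 1) *ᵥ x = A *ᵥ (A ^ k *ᵥ x) := by
        rw [Matrix.mulVec_mulVec, ← pow_succ']
      rw [hk]
      exact hstep _
  -- the iterates tend to zero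
  have hy : Tendsto (fun k : ℕ => A ^ k *ᵥ x) atTop (𝓝 0) := by
    rw [tendsto_pi_nhds]
    intro i
    have hsum : Tendsto (fun k : ℕ => ∑ j, (A ^ k) i j * x j) atTop (𝓝 0) := by
      have h0 : (0 : ℝ) = ∑ j : Fin n, 0 * x j := by simp
      rw [h0]
      exact tendsto_finset_sum _ fun j _ => (schur_entry_tendsto hA i j).mul_const (x j)
    simpa [Matrix.mulVec, dotProduct] using hsum
  have hcont : Continuous (fun v : Fin n → ℝ => v ⬝ᵥ (Z *ᵥ v)) := by
    have h : (fun v : Fin n → ℝ => v ⬝ᵥ (Z *ᵥ v))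
        = fun v => ∑ i, v i * ∑ j, Z i j * v j := rfl
    rw [h]
    exact continuous_finset_sum _ fun i _ => (continuous_apply i).mul
      (continuous_finset_sum _ fun j _ => continuous_const.mul (continuous_apply j))
  have h0 : (fun v : Fin n → ℝ => v ⬝ᵥ (Z *ᵥ v)) 0 = 0 := by simp
  have hlim : Tendsto (fun k : ℕ => (A ^ k *ᵥ x) ⬝ᵥ (Z *ᵥ (A ^ k *ᵥ x))) atTop
      (𝓝 ((fun v : Fin n → ℝ => v ⬝ᵥ (Z *ᵥ v)) 0)) := (hcont.tendsto 0).comp hy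
  rw [h0] at hlim
  exact ge_of_tendsto hlim (Eventually.of_forall hiter)

private lemma key_identity {n m : ℕ} (A : Matrix (Fin n) (Fin n) ℝ) (B : Matrix (Fin n) (Fin m) ℝ)
    (Q : Matrix (Fin n) (Fin n) ℝ) (R : Matrix (Fin m) (Fin m) ℝ)
    (K1 K2 : Matrix (Fin m) (Fin n) ℝ) (X1 X2 : Matrix (Fin n) (Fin n) ℝ)
    (hX1 : X1ᵀ = X1) (hR : Rᵀ = R)
    (hLyap1 : (A - B * K1)ᵀ * X1 * (A - B * K1) + Q + K1ᵀ * R * K1 = X1)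
    (hLyap2 : (A - B * K2)ᵀ * X2 * (A - B * K2) + Q + K2ᵀ * R * K2 = X2)
    (hN1 : R * K1 - Bᵀ * X1 * (A - B * K1) = 0) :
    (A - B * K2)ᵀ * (X1 - X2) * (A - B * K2) - (X1 - X2)
      = (K1 - K2)ᵀ * (R + Bᵀ * X1 * B) * (K1 - K2) := by
  have hN1t : K1ᵀ * R - (A - B * K1)ᵀ * X1 * B = 0 := by
    have h := congrArg Matrix.transpose hN1
    simpa [Matrix.transpose_sub, Matrix.transpose_mul, hX1, hR, Matrix.mul_assoc] using h
  have key : (A - B * K2)ᵀ * (X1 - X2) * (A - B * K2) - (X1 - X2)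
      - (K1 - K2)ᵀ * (R + Bᵀ * X1 * B) * (K1 - K2)
      = ((A - B * K1)ᵀ * X1 * (A - B * K1) + Q + K1ᵀ * R * K1 - X1)
        - ((A - B * K2)ᵀ * X2 * (A - B * K2) + Q + K2ᵀ * R * K2 - X2)
        - (K1 - K2)ᵀ * (R * K1 - Bᵀ * X1 * (A - B * K1))
        - (K1ᵀ * R - (A - B * K1)ᵀ * X1 * B) * (K1 - K2) := by
    simp only [Matrix.transpose_sub, Matrix.transpose_mul, hX1, Matrix.mul_sub, Matrix.sub_mul,
      Matrix.mul_add, Matrix.add_mul, Matrix.mul_assoc]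
    abel
  rw [hLyap1, hLyap2, hN1, hN1t] at key
  simp only [sub_self, Matrix.mul_zero, Matrix.zero_mul, sub_zero, zero_sub] at key
  exact sub_eq_zero.mp key

private lemma eq_zero_of_quad {n : ℕ} {Z : Matrix (Fin n) (Fin n) ℝ} (hZ : Zᵀ = Z)
    (h : ∀ x : Fin n → ℝ, x ⬝ᵥ (Z *ᵥ x) = 0) : Z = 0 := by
  have he : ∀ i j : Fin n, (Pi.single i 1) ⬝ᵥ (Z *ᵥ Pi.single j (1 : ℝ)) = Z i j := by
    intro i j
    simp [dotProduct, Matrix.mulVec, Pi.single_apply, mul_ite, Finset.sum_ite_eq']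
  ext i j
  have hsym : Z j i = Z i j := by
    conv_lhs => rw [← hZ, Matrix.transpose_apply]
  have h1 := h (Pi.single i 1)
  have h2 := h (Pi.single j 1)
  have h3 := h (Pi.single i 1 + Pi.single j 1)
  simp only [Matrix.mulVec_add, add_dotProduct, dotProduct_add, he] at h3
  rw [he] at h1
  rw [he] at h2
  simp only [Matrix.zero_apply]
  linarith

end Aux

/-- Uniqueness of stabilizing stationary solutions. -/
theorem stmt5 {n m : ℕ} (A : Matrix (Fin n) (Fin n) ℝ) (B : Matrix (Fin n) (Fin m) ℝ)
    (Q : Matrix (Fin n) (Fin n) ℝ) (R : Matrix (Fin m) (Fin m) ℝ)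
    (hQ : Qᵀ = Q) (hR : Rᵀ = R)
    (K1 K2 : Matrix (Fin m) (Fin n) ℝ) (X1 X2 : Matrix (Fin n) (Fin n) ℝ)
    (hX1 : X1ᵀ = X1) (hX2 : X2ᵀ = X2)
    (hS1 : IsSchur (A - B * K1)) (hS2 : IsSchur (A - B * K2))
    (hLyap1 : (A - B * K1)ᵀ * X1 * (A - B * K1) + Q + K1ᵀ * R * K1 = X1)
    (hLyap2 : (A - B * K2)ᵀ * X2 * (A - B * K2) + Q + K2ᵀ * R * K2 = X2)
    (hN1 : R * K1 - Bᵀ * X1 * (A - B * K1) = 0)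
    (hN2 : R * K2 - Bᵀ * X2 * (A - B * K2) = 0)
    (hP1 : (R + Bᵀ * X1 * B).PosSemidef) (hP2 : (R + Bᵀ * X2 * B).PosSemidef) :
    X1 = X2 := by
  have hid1 := key_identity A B Q R K1 K2 X1 X2 hX1 hR hLyap1 hLyap2 hN1
  have hid2 := key_identity A B Q R K2 K1 X2 X1 hX2 hR hLyap2 hLyap1 hN2
  -- transpose facts for PosSemidef transfer
  have hps1 : ((A - B * K2)ᵀ * (X1 - X2) * (A - B * K2) - (X1 - X2)).PosSemidef := by
    rw [hid1]
    have h := hP1.mul_mul_conjTranspose_same (K1 - K2)ᵀ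
    simpa [Matrix.conjTranspose_eq_transpose_of_trivial, Matrix.transpose_transpose] using h
  have hps2 : ((A - B * K1)ᵀ * (X2 - X1) * (A - B * K1) - (X2 - X1)).PosSemidef := by
    rw [hid2]
    have h := hP2.mul_mul_conjTranspose_same (K2 - K1)ᵀ
    simpa [Matrix.conjTranspose_eq_transpose_of_trivial, Matrix.transpose_transpose] using h
  have hq1 : ∀ x : Fin n → ℝ, x ⬝ᵥ ((X1 - X2) *ᵥ x) ≤ 0 := quad_nonpos hS2 hps1
  have hq2 : ∀ x : Fin n → ℝ, x ⬝ᵥ ((X2 - X1) *ᵥ x) ≤ 0 := quad_nonpos hS1 hps2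
  have hzero : ∀ x : Fin n → ℝ, x ⬝ᵥ ((X1 - X2) *ᵥ x) = 0 := by
    intro x
    have h2 := hq2 x
    rw [show X2 - X1 = -(X1 - X2) from (neg_sub X1 X2).symm, Matrix.neg_mulVec,
      dotProduct_neg, neg_nonpos] at h2
    exact le_antisymm (hq1 x) h2
  have hZt : (X1 - X2)ᵀ = X1 - X2 := by rw [Matrix.transpose_sub, hX1, hX2]
  have hZ := eq_zero_of_quad hZt hzero
  exact sub_eq_zero.mp hZ
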